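/- Consider the uncertain linear system x_{k+1} = A_k x_k + B_k u_k + w_k with (A_k,B_k,w_k) ∈ 𝔻 for a non-empty, compact, convex set 𝔻 ⊆ ℝ^{n_x×n_x}×ℝ^{n_x×n_u}×ℝ^{n_x}, and let 𝕌 ⊆ ℝ^{n_u} be convex. Let X_s ⊆ 𝕏 be a compact convex RCI set, let λ ∈ [0,1), and let X ⊆ 𝕏 be a compact convex set that is robust λ-contractive relative to X_s. Define X_k := λ^k X ⊕ (1−λ^k) X_s for k ∈ ℕ. Then for every k ∈ ℕ and every x ∈ X_k there exists u ∈ 𝕌 such that A x + B u + w ∈ X_{k+1} for all (A,B,w) ∈ 𝔻. In particular, for every x_0 ∈ X there exist admissible controls keeping the state in λ^k X ⊕ (1−λ^k) X_s at every step k, regardless of the realization of the uncertainty. -/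

import Mathlib

open Matrix Set MeasureTheory
open scoped Classical Pointwise

noncomputable section

def epiF {nx : ℕ} (M : (Fin nx → ℝ) → EReal) : Set ((Fin nx → ℝ) × ℝ) :=
  {p | M p.1 ≤ (p.2 : EReal)}

def domF {nx : ℕ} (M : (Fin nx → ℝ) → EReal) : Set (Fin nx → ℝ) :=
  {x | M x < ⊤}

def ProperCompactConvex {nx : ℕ} (M : (Fin nx → ℝ) → EReal) : Prop :=
  (∀ x, M x ≠ ⊥) ∧ (domF M).Nonempty ∧ IsCompact (domF M) ∧
    IsClosed (epiF M) ∧ Convex ℝ (epiF M)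

def Pset {nx f : ℕ} (G : Matrix (Fin f) (Fin nx) ℝ) (h : Fin f → ℝ)
    (z : Fin f → ℝ) : Set ((Fin nx → ℝ) × ℝ) :=
  {p | ∀ i, (G *ᵥ p.1) i + h i * p.2 ≤ z i}

def Kcone (nx : ℕ) : Set ((Fin nx → ℝ) × ℝ) := {p | p.1 = 0 ∧ 0 ≤ p.2}

def vertPt {nx f : ℕ} (R : Matrix (Fin nx) (Fin f) ℝ) (s : Fin f → ℝ)
    (z : Fin f → ℝ) : (Fin nx → ℝ) × ℝ := (R *ᵥ z, s ⬝ᵥ z)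

def ConfigTriplet {nx f e v : ℕ} (G : Matrix (Fin f) (Fin nx) ℝ) (h : Fin f → ℝ)
    (E : Matrix (Fin e) (Fin f) ℝ)
    (R : Fin v → Matrix (Fin nx) (Fin f) ℝ) (s : Fin v → Fin f → ℝ) : Prop :=
  ∀ z : Fin f → ℝ,
    Pset G h z = convexHull ℝ (Set.range fun i => vertPt (R i) (s i) z) + Kcone nx
      ↔ ∀ i, (E *ᵥ z) i ≤ 0

def PolyFamily {nx f e : ℕ} (G : Matrix (Fin f) (Fin nx) ℝ) (h : Fin f → ℝ)
    (E : Matrix (Fin e) (Fin f) ℝ) : Set (Set ((Fin nx → ℝ) × ℝ)) :=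
  {P | ∃ z : Fin f → ℝ, (∀ i, (E *ᵥ z) i ≤ 0) ∧ P = Pset G h z}

def indE {n : ℕ} (S : Set (Fin n → ℝ)) (x : Fin n → ℝ) : EReal :=
  if x ∈ S then 0 else ⊤

def IsLCLF {nx nu : ℕ} (A : Matrix (Fin nx) (Fin nx) ℝ) (B : Matrix (Fin nx) (Fin nu) ℝ)
    (𝕏 : Set (Fin nx → ℝ)) (𝕌 : Set (Fin nu → ℝ))
    (L : (Fin nx → ℝ) → (Fin nu → ℝ) → ℝ) (M : (Fin nx → ℝ) → EReal) : Prop :=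
  M 0 = 0 ∧ (∀ x, x ≠ 0 → 0 < M x) ∧ ProperCompactConvex M ∧
    ∀ x, (⨅ u ∈ 𝕌, ((L x u : EReal) + indE 𝕏 x + M (A *ᵥ x + B *ᵥ u))) ≤ M x

def RobustCLF {nx nu : ℕ}
    (𝔻 : Set (Matrix (Fin nx) (Fin nx) ℝ × Matrix (Fin nx) (Fin nu) ℝ × (Fin nx → ℝ)))
    (𝕏 : Set (Fin nx → ℝ)) (𝕌 : Set (Fin nu → ℝ))
    (L : (Fin nx → ℝ) → (Fin nu → ℝ) → ℝ) (M : (Fin nx → ℝ) → EReal) : Prop :=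
  (∀ x, 0 ≤ M x) ∧ ProperCompactConvex M ∧ (∃ xs ∈ 𝕏, M xs = 0) ∧
    ∀ x, (⨅ u ∈ 𝕌, ⨆ d ∈ 𝔻,
      ((L x u : EReal) + indE 𝕏 x + M (d.1 *ᵥ x + d.2.1 *ᵥ u + d.2.2))) ≤ M x

def IsRCI {nx nu : ℕ}
    (𝔻 : Set (Matrix (Fin nx) (Fin nx) ℝ × Matrix (Fin nx) (Fin nu) ℝ × (Fin nx → ℝ)))
    (𝕏 : Set (Fin nx → ℝ)) (𝕌 : Set (Fin nu → ℝ)) (X : Set (Fin nx → ℝ)) : Prop :=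
  X ⊆ 𝕏 ∧ IsCompact X ∧ Convex ℝ X ∧
    ∀ x ∈ X, ∃ u ∈ 𝕌, ∀ d ∈ 𝔻, d.1 *ᵥ x + d.2.1 *ᵥ u + d.2.2 ∈ X

def LPSDwrt {nx nu : ℕ}
    (𝔻 : Set (Matrix (Fin nx) (Fin nx) ℝ × Matrix (Fin nx) (Fin nu) ℝ × (Fin nx → ℝ)))
    (𝕌 : Set (Fin nu → ℝ)) (L : (Fin nx → ℝ) → (Fin nu → ℝ) → ℝ)
    (Xs : Set (Fin nx → ℝ)) : Prop :=
  ∀ x ∈ Xs, ∃ u ∈ 𝕌, L x u = 0 ∧ ∀ d ∈ 𝔻, d.1 *ᵥ x + d.2.1 *ᵥ u + d.2.2 ∈ Xs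

def RobustLambdaContractive {nx nu : ℕ}
    (𝔻 : Set (Matrix (Fin nx) (Fin nx) ℝ × Matrix (Fin nx) (Fin nu) ℝ × (Fin nx → ℝ)))
    (𝕌 : Set (Fin nu → ℝ)) (Xs : Set (Fin nx → ℝ)) (lam : ℝ)
    (X : Set (Fin nx → ℝ)) : Prop :=
  ∀ x ∈ X, ∃ u ∈ 𝕌, ∀ d ∈ 𝔻,
    d.1 *ᵥ x + d.2.1 *ᵥ u + d.2.2 ∈ lam • X + (1 - lam) • Xs

def Jcost {nx nu : ℕ} (A : Matrix (Fin nx) (Fin nx) ℝ) (B : Matrix (Fin nx) (Fin nu) ℝ)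
    (𝕌 : Set (Fin nu → ℝ)) (X : Set (Fin nx → ℝ))
    (L : (Fin nx → ℝ) → (Fin nu → ℝ) → ℝ) (M : (Fin nx → ℝ) → EReal)
    (N : ℕ) (x0 : Fin nx → ℝ) : EReal :=
  sInf {c : EReal | ∃ (xs : ℕ → (Fin nx → ℝ)) (us : ℕ → (Fin nu → ℝ)),
    xs 0 = x0 ∧
    (∀ k < N, us k ∈ 𝕌 ∧ xs k ∈ X ∧ xs (k + 1) = A *ᵥ xs k + B *ᵥ us k) ∧
    c = ((∑ k ∈ Finset.range N, L (xs k) (us k) : ℝ) : EReal) + M (xs N)}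

def Dij {nx nu f : ℕ} (G : Matrix (Fin f) (Fin nx) ℝ)
    (𝔻 : Set (Matrix (Fin nx) (Fin nx) ℝ × Matrix (Fin nx) (Fin nu) ℝ × (Fin nx → ℝ)))
    (xi : Fin nx → ℝ) (c : Fin nu → ℝ) (j : Fin f) : ℝ :=
  sSup ((fun d : Matrix (Fin nx) (Fin nx) ℝ × Matrix (Fin nx) (Fin nu) ℝ × (Fin nx → ℝ) =>
    (G *ᵥ (d.1 *ᵥ xi + d.2.1 *ᵥ c + d.2.2)) j) '' 𝔻)

/-- robust exponential stabilizability step in the proof of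
Lemma 2: with `X_k := λᵏX ⊕ (1−λᵏ)X_s`, from any `x ∈ X_k` one can robustly
steer into `X_{k+1}`; in particular, from any `x₀ ∈ X` there are feedback
controls keeping the state in `X_k` at every step `k`, regardless of the
realization of the uncertainty. -/
theorem stmt_14 {nx nu : ℕ}
    (𝔻 : Set (Matrix (Fin nx) (Fin nx) ℝ × Matrix (Fin nx) (Fin nu) ℝ × (Fin nx → ℝ)))
    (hDne : 𝔻.Nonempty) (hDcomp : IsCompact 𝔻) (hDcv : Convex ℝ 𝔻)
    (𝕏 : Set (Fin nx → ℝ)) (𝕌 : Set (Fin nu → ℝ)) (hUcv : Convex ℝ 𝕌)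
    (Xs : Set (Fin nx → ℝ)) (hXs : IsRCI 𝔻 𝕏 𝕌 Xs)
    (lam : ℝ) (hlam0 : 0 ≤ lam) (hlam1 : lam < 1)
    (X : Set (Fin nx → ℝ)) (hXsub : X ⊆ 𝕏) (hXcomp : IsCompact X)
    (hXcv : Convex ℝ X)
    (hcontr : RobustLambdaContractive 𝔻 𝕌 Xs lam X) :
    (∀ k : ℕ, ∀ x ∈ lam ^ k • X + (1 - lam ^ k) • Xs,
      ∃ u ∈ 𝕌, ∀ d ∈ 𝔻,
        d.1 *ᵥ x + d.2.1 *ᵥ u + d.2.2 ∈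
          lam ^ (k + 1) • X + (1 - lam ^ (k + 1)) • Xs) ∧
    (∀ x0 ∈ X, ∃ κ : ℕ → (Fin nx → ℝ) → (Fin nu → ℝ),
      (∀ k x, κ k x ∈ 𝕌) ∧
      ∀ (xs : ℕ → (Fin nx → ℝ))
        (ds : ℕ → Matrix (Fin nx) (Fin nx) ℝ × Matrix (Fin nx) (Fin nu) ℝ × (Fin nx → ℝ)),
        xs 0 = x0 → (∀ k, ds k ∈ 𝔻) →
        (∀ k, xs (k + 1) = (ds k).1 *ᵥ xs k + (ds k).2.1 *ᵥ κ k (xs k) + (ds k).2.2) →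
        ∀ k, xs k ∈ lam ^ k • X + (1 - lam ^ k) • Xs) := by

  have hstep : ∀ k : ℕ, ∀ x ∈ lam ^ k • X + (1 - lam ^ k) • Xs,
      ∃ u ∈ 𝕌, ∀ d ∈ 𝔻,
        d.1 *ᵥ x + d.2.1 *ᵥ u + d.2.2 ∈
          lam ^ (k + 1) • X + (1 - lam ^ (k + 1)) • Xs := by
    intro k x hx
    obtain ⟨x1, hx1, x2, hx2, hsum⟩ := hx
    obtain ⟨a, ha, rfl⟩ := hx1
    obtain ⟨b, hb, rfl⟩ := hx2
    obtain ⟨ua, hua, hcon⟩ := hcontr a ha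
    obtain ⟨ub, hub, hrci⟩ := hXs.2.2.2 b hb
    have hlk0 : (0:ℝ) ≤ lam ^ k := pow_nonneg hlam0 k
    have hlk1 : lam ^ k ≤ 1 := pow_le_one₀ hlam0 hlam1.le
    refine ⟨lam ^ k • ua + (1 - lam ^ k) • ub,
      hUcv hua hub hlk0 (by linarith) (by ring), ?_⟩
    intro d hd
    obtain ⟨y1, hy1, y2, hy2, hsum1⟩ := hcon d hd
    obtain ⟨p, hp, rfl⟩ := hy1
    obtain ⟨q, hq, rfl⟩ := hy2
    have hr := hrci d hd
    set c1 : ℝ := lam ^ k * (1 - lam) with hc1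
    set c2 : ℝ := 1 - lam ^ k with hc2
    have hc : (0:ℝ) < 1 - lam ^ (k+1) := by
      have := pow_lt_one₀ hlam0 hlam1 (by omega : k + 1 ≠ 0); linarith
    have hc1nn : 0 ≤ c1 := mul_nonneg hlk0 (by linarith)
    have hc2nn : 0 ≤ c2 := by rw [hc2]; linarith
    set r : Fin nx → ℝ := d.1 *ᵥ b + d.2.1 *ᵥ ub + d.2.2 with hrdef
    set s : Fin nx → ℝ := (c1 / (1 - lam ^ (k+1))) • q
        + (c2 / (1 - lam ^ (k+1))) • r with hs
    have hsmem : s ∈ Xs := by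
      refine hXs.2.2.1 hq hr (div_nonneg hc1nn hc.le) (div_nonneg hc2nn hc.le) ?_
      rw [← add_div, div_eq_one_iff_eq hc.ne', hc1, hc2]; ring
    refine ⟨lam ^ (k+1) • p, smul_mem_smul_set hp,
      (1 - lam ^ (k+1)) • s, smul_mem_smul_set hsmem, ?_⟩
    have hss : (1 - lam ^ (k+1)) • s = c1 • q + c2 • r := by
      rw [hs, smul_add, smul_smul, smul_smul,
        mul_div_cancel₀ c1 hc.ne', mul_div_cancel₀ c2 hc.ne']
    show lam ^ (k+1) • p + (1 - lam ^ (k+1)) • s = _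
    rw [hss, ← hsum, hrdef]
    symm
    have hsum1' : d.1 *ᵥ a + d.2.1 *ᵥ ua + d.2.2 = lam • p + (1 - lam) • q :=
      hsum1.symm
    rw [Matrix.mulVec_add, Matrix.mulVec_add, Matrix.mulVec_smul,
      Matrix.mulVec_smul, Matrix.mulVec_smul, Matrix.mulVec_smul]
    have key : lam ^ k • (d.1 *ᵥ a + d.2.1 *ᵥ ua + d.2.2)
        + (1 - lam ^ k) • (d.1 *ᵥ b + d.2.1 *ᵥ ub + d.2.2)
        = lam ^ k • (lam • p + (1 - lam) • q)
          + (1 - lam ^ k) • (d.1 *ᵥ b + d.2.1 *ᵥ ub + d.2.2) := by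
      rw [hsum1']
    have expand : lam ^ k • (lam • p + (1 - lam) • q)
        + (1 - lam ^ k) • (d.1 *ᵥ b + d.2.1 *ᵥ ub + d.2.2)
        = lam ^ (k+1) • p + (c1 • q + c2 • (d.1 *ᵥ b + d.2.1 *ᵥ ub + d.2.2)) := by
      rw [hc1, hc2, pow_succ]
      module
    calc lam ^ k • (d.1 *ᵥ a) + (1 - lam ^ k) • (d.1 *ᵥ b)
          + (lam ^ k • (d.2.1 *ᵥ ua) + (1 - lam ^ k) • (d.2.1 *ᵥ ub)) + d.2.2
        = lam ^ k • (d.1 *ᵥ a + d.2.1 *ᵥ ua + d.2.2)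
          + (1 - lam ^ k) • (d.1 *ᵥ b + d.2.1 *ᵥ ub + d.2.2) := by module
      _ = lam ^ (k+1) • p + (c1 • q + c2 • (d.1 *ᵥ b + d.2.1 *ᵥ ub + d.2.2)) := by
          rw [key, expand]
  refine ⟨hstep, ?_⟩
  intro x0 hx0
  obtain ⟨u0, hu0, hcon0⟩ := hcontr x0 hx0
  have hXsne : Xs.Nonempty := by
    obtain ⟨d, hd⟩ := hDne
    obtain ⟨_, _, y, hy, _⟩ := hcon0 d hd
    obtain ⟨b, hb, _⟩ := hy
    exact ⟨b, hb⟩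
  have h0 : x0 ∈ lam ^ 0 • X + (1 - lam ^ 0) • Xs := by
    simp only [pow_zero, sub_self, one_smul]
    rw [Set.zero_smul_set hXsne]
    exact ⟨x0, hx0, 0, by simp, add_zero x0⟩
  refine ⟨fun k x => if h : x ∈ lam ^ k • X + (1 - lam ^ k) • Xs
      then (hstep k x h).choose else u0, fun k x => ?_, ?_⟩
  · dsimp only; split
    · next h => exact (hstep k x h).choose_spec.1
    · exact hu0
  · intro xs ds hxs0 hds hrec k
    induction k with
    | zero => rw [hxs0]; exact h0
    | succ n ih =>
      rw [hrec n]
      have h' := (hstep n (xs n) ih).choose_spec.2 (ds n) (hds n)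
      simpa only [dif_pos ih] using h'
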